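/- Let L = {ε} ∪ 1{0,1}* be the set of binary words with no leading zeros, and let L_n be the words of L of length at most n. Then the number of pairs (u,v) ∈ L_n × L_n with (u choose v) > 0 equals 3^n. -/

import Mathlib

/-- The binomial coefficient of words: the number of occurrences of the second
word as a scattered subsequence of the first. -/
def wb {A : Type*} [DecidableEq A] : List A → List A → ℕ
  | _, [] => 1
  | [], _ :: _ => 0
  | a :: u, b :: v => wb u (b :: v) + (if a = b then wb u v else 0)

/-- Binary representation of a natural number, most significant bit first,
with no leading zeros (`rep2 0 = []`). -/
def rep2 (n : ℕ) : List Bool := (Nat.bits n).reverse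

theorem wb_pos {A : Type*} [DecidableEq A] (u v : List A) : 0 < wb u v ↔ v.Sublist u := by
  induction u generalizing v with
  | nil => cases v <;> simp [wb]
  | cons a u ih =>
    cases v with
    | nil => simp [wb]
    | cons b v =>
      rw [wb]
      constructor
      · intro h
        by_cases hab : a = b
        · subst hab
          rw [if_pos rfl] at h
          rcases Nat.eq_zero_or_pos (wb u (a :: v)) with h0 | hp
          · exact ((ih v).1 (by omega)).cons₂ a
          · exact ((ih (a :: v)).1 hp).cons a
        · simp only [if_neg hab, Nat.add_zero] at h
          exact ((ih (b :: v)).1 h).cons a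
      · intro h
        cases h with
        | cons _ h => exact Nat.lt_of_lt_of_le ((ih _).2 h) (Nat.le_add_right _ _)
        | cons_cons _ h => simp [ih, h]

theorem rep2_zero : rep2 0 = [] := by simp [rep2]
theorem rep2_odd (a : ℕ) : rep2 (2*a+1) = rep2 a ++ [true] := by
  simp [rep2, Nat.bit1_bits]
theorem rep2_even (a : ℕ) (h : a ≠ 0) : rep2 (2*a) = rep2 a ++ [false] := by
  simp [rep2, Nat.bit0_bits _ h]

theorem bits_val (n : ℕ) : (Nat.bits n).foldr (fun b m => 2*m + b.toNat) 0 = n := by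
  induction n using Nat.strong_induction_on with
  | _ n ih =>
    rcases Nat.eq_zero_or_pos n with rfl | hn
    · simp
    rcases Nat.even_or_odd n with ⟨m, hm⟩ | ⟨m, hm⟩
    · have hm' : n = 2*m := by omega
      have : m ≠ 0 := by omega
      rw [hm', Nat.bit0_bits _ this]
      simp [ih m (by omega)]
    · rw [hm, Nat.bit1_bits]
      simp [ih m (by omega)]

theorem rep2_inj {a b : ℕ} (h : rep2 a = rep2 b) : a = b := by
  have : Nat.bits a = Nat.bits b := by
    have := congrArg List.reverse h; simpa [rep2] using this
  rw [← bits_val a, ← bits_val b, this]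

theorem rep2_length (a : ℕ) : (rep2 a).length = a.size := by
  simp [rep2, Nat.size_eq_bits_len]

theorem sub_le {b a : ℕ} (h : (rep2 b).Sublist (rep2 a)) : b ≤ a := by
  have hl := h.length_le
  rcases eq_or_lt_of_le hl with he | hlt
  · exact (rep2_inj (h.eq_of_length he)).le
  · have h1 : b < 2 ^ (rep2 b).length := by rw [rep2_length]; exact Nat.lt_size_self b
    have h2 : 2 ^ (rep2 b).length ≤ a := Nat.lt_size.mp (by rwa [rep2_length a] at hlt)
    omega

def S (a : ℕ) : Finset ℕ := (Finset.range (a+1)).filter (fun b => (rep2 b).Sublist (rep2 a))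

theorem mem_S {b a : ℕ} : b ∈ S a ↔ (rep2 b).Sublist (rep2 a) := by
  simp only [S, Finset.mem_filter, Finset.mem_range]
  exact ⟨fun h => h.2, fun h => ⟨Nat.lt_succ_of_le (sub_le h), h⟩⟩

theorem R_of_odd {b a : ℕ} (h : (rep2 (2*b+1)).Sublist (rep2 a)) :
    (rep2 b).Sublist (rep2 a) := by
  refine List.Sublist.trans ?_ h
  rw [rep2_odd]; exact List.sublist_append_left _ _

theorem R_of_even {b a : ℕ} (hb : b ≠ 0) (h : (rep2 (2*b)).Sublist (rep2 a)) :
    (rep2 b).Sublist (rep2 a) := by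
  refine List.Sublist.trans ?_ h
  rw [rep2_even b hb]; exact List.sublist_append_left _ _

theorem concat_decomp {b : ℕ} {t : List Bool} {c : Bool} (h : rep2 b = t ++ [c]) :
    (c = true ∧ ∃ b', b = 2*b'+1 ∧ t = rep2 b') ∨
    (c = false ∧ ∃ b', b' ≠ 0 ∧ b = 2*b' ∧ t = rep2 b') := by
  have hb : b ≠ 0 := by rintro rfl; rw [rep2_zero] at h; simp at h
  rcases Nat.even_or_odd b with ⟨m, hm⟩ | ⟨m, hm⟩
  · have hm' : b = 2*m := by omega
    have hm0 : m ≠ 0 := by omega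
    rw [hm', rep2_even m hm0] at h
    obtain ⟨h1, h2⟩ := List.append_inj' h rfl
    right
    exact ⟨by simpa using h2.symm, m, hm0, hm', h1.symm⟩
  · rw [hm, rep2_odd] at h
    obtain ⟨h1, h2⟩ := List.append_inj' h rfl
    left
    exact ⟨by simpa using h2.symm, m, hm, h1.symm⟩

theorem S_odd (a : ℕ) : S (2*a+1) = S a ∪
    ((S a).filter (fun b => ¬ (rep2 (2*b+1)).Sublist (rep2 a))).image (fun b => 2*b+1) := by
  ext b
  simp only [mem_S, Finset.mem_union, Finset.mem_image, Finset.mem_filter]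
  constructor
  · intro h
    rw [rep2_odd] at h
    by_cases hba : (rep2 b).Sublist (rep2 a)
    · exact Or.inl hba
    · right
      rcases List.sublist_append_iff.mp h with ⟨l₁, l₂, he, hs1, hs2⟩
      rcases List.sublist_singleton.mp hs2 with rfl | rfl
      · rw [List.append_nil] at he; exact absurd (he ▸ hs1) hba
      · rcases concat_decomp he with ⟨-, b', rfl, rfl⟩ | ⟨hc, -⟩
        · exact ⟨b', ⟨hs1, hba⟩, rfl⟩
        · simp at hc
  · rintro (h | ⟨b', ⟨hb', hnot⟩, rfl⟩)
    · exact h.trans (by rw [rep2_odd]; exact List.sublist_append_left _ _)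
    · rw [rep2_odd, rep2_odd]
      exact hb'.append (List.Sublist.refl _)

theorem S_even (a : ℕ) (ha : a ≠ 0) : S (2*a) = S a ∪
    ((S a).filter (fun b => b ≠ 0 ∧ ¬ (rep2 (2*b)).Sublist (rep2 a))).image (fun b => 2*b) := by
  ext b
  simp only [mem_S, Finset.mem_union, Finset.mem_image, Finset.mem_filter]
  constructor
  · intro h
    rw [rep2_even a ha] at h
    by_cases hba : (rep2 b).Sublist (rep2 a)
    · exact Or.inl hba
    · right
      rcases List.sublist_append_iff.mp h with ⟨l₁, l₂, he, hs1, hs2⟩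
      rcases List.sublist_singleton.mp hs2 with rfl | rfl
      · rw [List.append_nil] at he; exact absurd (he ▸ hs1) hba
      · rcases concat_decomp he with ⟨hc, -⟩ | ⟨-, b', hb0, rfl, rfl⟩
        · simp at hc
        · exact ⟨b', ⟨hs1, hb0, hba⟩, rfl⟩
  · rintro (h | ⟨b', ⟨hb', hb0, hnot⟩, rfl⟩)
    · exact h.trans (by rw [rep2_even a ha]; exact List.sublist_append_left _ _)
    · rw [rep2_even a ha, rep2_even b' hb0]
      exact hb'.append (List.Sublist.refl _)

theorem S_split (a : ℕ) : S a = insert 0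
    ((((S a).filter (fun b => (rep2 (2*b+1)).Sublist (rep2 a))).image (fun b => 2*b+1)) ∪
     (((S a).filter (fun b => b ≠ 0 ∧ (rep2 (2*b)).Sublist (rep2 a))).image (fun b => 2*b))) := by
  ext b
  simp only [mem_S, Finset.mem_insert, Finset.mem_union, Finset.mem_image, Finset.mem_filter]
  constructor
  · intro h
    rcases Nat.eq_zero_or_pos b with rfl | hb
    · exact Or.inl rfl
    · right
      rcases Nat.even_or_odd b with ⟨m, hm⟩ | ⟨m, hm⟩
      · have hm' : b = 2*m := by omega
        have hm0 : m ≠ 0 := by omega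
        exact Or.inr ⟨m, ⟨R_of_even hm0 (hm' ▸ h), hm0, hm' ▸ h⟩, hm'.symm⟩
      · exact Or.inl ⟨m, ⟨R_of_odd (hm ▸ h), hm ▸ h⟩, hm.symm⟩
  · rintro (rfl | ⟨b', ⟨-, h⟩, rfl⟩ | ⟨b', ⟨-, -, h⟩, rfl⟩)
    · rw [rep2_zero]; exact List.nil_sublist _
    · exact h
    · exact h

def dd (a : ℕ) : ℕ := (S a).card
def e1 (a : ℕ) : ℕ := (((S a).filter (fun b => (rep2 (2*b+1)).Sublist (rep2 a)))).card
def e0 (a : ℕ) : ℕ := (((S a).filter (fun b => b ≠ 0 ∧ (rep2 (2*b)).Sublist (rep2 a)))).card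

theorem card_odd (a : ℕ) : dd (2*a+1) + e1 a = 2 * dd a := by
  have hdisj : Disjoint (S a)
      (((S a).filter (fun b => ¬ (rep2 (2*b+1)).Sublist (rep2 a))).image (fun b => 2*b+1)) := by
    rw [Finset.disjoint_right]
    rintro x hx hx2
    simp only [Finset.mem_image, Finset.mem_filter] at hx
    obtain ⟨b', ⟨-, hn⟩, rfl⟩ := hx
    exact hn (mem_S.mp hx2)
  have hinj : Function.Injective (fun b : ℕ => 2*b+1) := fun x y h => by simp only at h; omega
  have h1 : dd (2*a+1) = dd a +
      ((S a).filter (fun b => ¬ (rep2 (2*b+1)).Sublist (rep2 a))).card := by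
    rw [dd, S_odd a, Finset.card_union_of_disjoint hdisj, Finset.card_image_of_injective _ hinj]
    rfl
  have h2 := Finset.card_filter_add_card_filter_not
    (s := S a) (p := fun b => (rep2 (2*b+1)).Sublist (rep2 a))
  rw [h1]
  unfold e1 dd at *
  omega

theorem card_even (a : ℕ) (ha : a ≠ 0) : dd (2*a) + e0 a + 1 = 2 * dd a := by
  have hdisj : Disjoint (S a)
      (((S a).filter (fun b => b ≠ 0 ∧ ¬ (rep2 (2*b)).Sublist (rep2 a))).image (fun b => 2*b)) := by
    rw [Finset.disjoint_right]
    rintro x hx hx2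
    simp only [Finset.mem_image, Finset.mem_filter] at hx
    obtain ⟨b', ⟨-, hb0, hn⟩, rfl⟩ := hx
    exact hn (mem_S.mp hx2)
  have hinj : Function.Injective (fun b : ℕ => 2*b) := fun x y h => by simp only at h; omega
  have h1 : dd (2*a) = dd a +
      ((S a).filter (fun b => b ≠ 0 ∧ ¬ (rep2 (2*b)).Sublist (rep2 a))).card := by
    rw [dd, S_even a ha, Finset.card_union_of_disjoint hdisj, Finset.card_image_of_injective _ hinj]
    rfl
  have h2 := Finset.card_filter_add_card_filter_not
    (s := S a) (p := fun b => b ≠ 0 ∧ (rep2 (2*b)).Sublist (rep2 a))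
  -- filter of the negation = insert 0 (filter (b ≠ 0 ∧ ¬ R))
  have h3 : (S a).filter (fun b => ¬(b ≠ 0 ∧ (rep2 (2*b)).Sublist (rep2 a))) =
      insert 0 ((S a).filter (fun b => b ≠ 0 ∧ ¬ (rep2 (2*b)).Sublist (rep2 a))) := by
    ext b
    simp only [Finset.mem_insert, Finset.mem_filter]
    constructor
    · rintro ⟨hb, hn⟩
      rcases Nat.eq_zero_or_pos b with rfl | hbp
      · exact Or.inl rfl
      · exact Or.inr ⟨hb, by omega, fun hc => hn ⟨by omega, hc⟩⟩
    · rintro (rfl | ⟨hb, hb0, hn⟩)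
      · exact ⟨mem_S.mpr (by rw [rep2_zero]; exact List.nil_sublist _), by simp⟩
      · exact ⟨hb, fun hc => hn hc.2⟩
  have h4 : (insert 0 ((S a).filter (fun b => b ≠ 0 ∧ ¬ (rep2 (2*b)).Sublist (rep2 a)))).card =
      ((S a).filter (fun b => b ≠ 0 ∧ ¬ (rep2 (2*b)).Sublist (rep2 a))).card + 1 := by
    rw [Finset.card_insert_of_notMem]
    simp only [Finset.mem_filter]
    rintro ⟨-, h, -⟩
    exact h rfl
  rw [h3, h4] at h2
  rw [h1]
  unfold e0 dd at *
  omega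

theorem card_split (a : ℕ) : dd a = 1 + e1 a + e0 a := by
  have hinj1 : Function.Injective (fun b : ℕ => 2*b+1) := fun x y h => by simp only at h; omega
  have hinj0 : Function.Injective (fun b : ℕ => 2*b) := fun x y h => by simp only at h; omega
  have hdisj : Disjoint
      (((S a).filter (fun b => (rep2 (2*b+1)).Sublist (rep2 a))).image (fun b => 2*b+1))
      (((S a).filter (fun b => b ≠ 0 ∧ (rep2 (2*b)).Sublist (rep2 a))).image (fun b => 2*b)) := by
    rw [Finset.disjoint_right]
    rintro x hx1 hx2
    simp only [Finset.mem_image, Finset.mem_filter] at hx1 hx2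
    obtain ⟨b1, -, hb1⟩ := hx1
    obtain ⟨b2, -, hb2⟩ := hx2
    omega
  have h0 : (0 : ℕ) ∉
      ((((S a).filter (fun b => (rep2 (2*b+1)).Sublist (rep2 a))).image (fun b => 2*b+1)) ∪
       (((S a).filter (fun b => b ≠ 0 ∧ (rep2 (2*b)).Sublist (rep2 a))).image (fun b => 2*b))) := by
    simp only [Finset.mem_union, Finset.mem_image, Finset.mem_filter]
    rintro (⟨b', -, hb⟩ | ⟨b', ⟨-, hb0, -⟩, hb⟩) <;> omega
  rw [dd, S_split a, Finset.card_insert_of_notMem h0, Finset.card_union_of_disjoint hdisj,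
    Finset.card_image_of_injective _ hinj1, Finset.card_image_of_injective _ hinj0]
  unfold e1 e0
  omega

theorem dd_zero : dd 0 = 1 := by
  have : S 0 = {0} := by
    ext b
    simp only [mem_S, Finset.mem_singleton, rep2_zero, List.sublist_nil]
    constructor
    · intro h; exact rep2_inj (h.trans rep2_zero.symm)
    · rintro rfl; rw [rep2_zero]
  rw [dd, this, Finset.card_singleton]

theorem dd_one : dd 1 = 2 := by
  have : S 1 = {0, 1} := by
    ext b
    simp only [mem_S, Finset.mem_insert, Finset.mem_singleton]
    constructor
    · intro h
      have := sub_le h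
      interval_cases b <;> simp
    · rintro (rfl | rfl)
      · rw [rep2_zero]; exact List.nil_sublist _
      · exact List.Sublist.refl _
  rw [dd, this]
  decide

theorem key (a : ℕ) : dd (2*a) + dd (2*a+1) = 3 * dd a := by
  rcases Nat.eq_zero_or_pos a with rfl | ha
  · rw [show 2*0 = 0 by ring, show 2*0+1 = 1 by ring, dd_zero, dd_one]
  · have h1 := card_odd a
    have h2 := card_even a (by omega)
    have h3 := card_split a
    omega

theorem sum_range_double (g : ℕ → ℕ) (m : ℕ) :
    ∑ a ∈ Finset.range (2*m), g a = ∑ a ∈ Finset.range m, (g (2*a) + g (2*a+1)) := by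
  induction m with
  | zero => simp
  | succ m ih =>
    rw [Finset.sum_range_succ, ← ih, show 2*(m+1) = (2*m+1)+1 by ring,
      Finset.sum_range_succ, Finset.sum_range_succ]
    omega

theorem sum_dd (n : ℕ) : ∑ a ∈ Finset.range (2^n), dd a = 3^n := by
  induction n with
  | zero => simpa using dd_zero
  | succ n ih =>
    rw [pow_succ, mul_comm, sum_range_double]
    calc ∑ a ∈ Finset.range (2^n), (dd (2*a) + dd (2*a+1))
        = ∑ a ∈ Finset.range (2^n), 3 * dd a := by
          exact Finset.sum_congr rfl (fun a _ => key a)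
      _ = 3 * 3^n := by rw [← Finset.mul_sum, ih]
      _ = 3^(n+1) := by ring

theorem stmt_9 (n : ℕ) :
    ((Finset.range (2 ^ n) ×ˢ Finset.range (2 ^ n)).filter
      (fun p => 0 < wb (rep2 p.1) (rep2 p.2))).card = 3 ^ n := by
  rw [Finset.card_filter, Finset.sum_product]
  have inner : ∀ a ∈ Finset.range (2^n),
      (∑ b ∈ Finset.range (2^n), if 0 < wb (rep2 a) (rep2 b) then 1 else 0) = dd a := by
    intro a ha
    rw [Finset.mem_range] at ha
    rw [← Finset.card_filter]
    congr 1
    ext b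
    simp only [Finset.mem_filter, Finset.mem_range, wb_pos, mem_S, S]
    constructor
    · rintro ⟨-, h⟩
      exact ⟨Nat.lt_succ_of_le (sub_le h), h⟩
    · rintro ⟨hb, h⟩
      exact ⟨lt_of_le_of_lt (sub_le h) ha, h⟩
  rw [Finset.sum_congr rfl inner, sum_dd]
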